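/- Let (a_j)_{j≥0} be i.i.d. standard Gaussian random variables. Then each d_j (0 ≤ j ≤ 2n−1) is a real-valued random variable, the random variables d_0, d_1, …, d_n are independent centered Gaussians with Var(d_j) = 1 for 0 < j < n and Var(d_0) = Var(d_n) = 2, and d_{2n−j} = d_j for all 0 < j < n. -/

import Mathlib

open MeasureTheory ProbabilityTheory
open scoped ENNReal NNReal

noncomputable section

/-- The sequence `b` of the circulant embedding: `b_0 = √2·a_0`, `b_n = √2·a_n`,
`b_j = a_j` for `0 < j < n` and `b_j = a_{2n-j}` for `n < j < 2n`. -/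
def bseq (n : ℕ) (a : ℕ → ℝ) (j : ℕ) : ℝ :=
  if j = 0 then Real.sqrt 2 * a 0
  else if j = n then Real.sqrt 2 * a n
  else if j < n then a j
  else a (2 * n - j)

/-- `d_j = (2n)^{-1/2} ∑_k b_k exp(2πi jk/(2n))`. -/
def dval (n : ℕ) (a : ℕ → ℝ) (j : ℕ) : ℂ :=
  (Real.sqrt (2 * n) : ℂ)⁻¹ * ∑ k : Fin (2 * n),
    (bseq n a k : ℂ) * Complex.exp (2 * Real.pi * Complex.I * (j : ℕ) * (k : ℕ) / (2 * n))

namespace DvalAux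
open Complex Finset

/-- the real coefficients of `d_j` as a linear combination of `a_0, …, a_n`. -/
def creal (n j k : ℕ) : ℝ :=
  (Real.sqrt (2*n))⁻¹ * (if k = 0 then Real.sqrt 2
    else if k = n then Real.sqrt 2 * (-1:ℝ)^j
    else 2 * Real.cos (2*Real.pi*j*k/(2*n)))

variable {n : ℕ}

lemma dval_eq (hn : 1 ≤ n) (a : ℕ → ℝ) (j : ℕ) :
    dval n a j = ((∑ k ∈ Finset.range (n+1), creal n j k * a k : ℝ) : ℂ) := by
  have hn0 : (n:ℂ) ≠ 0 := Nat.cast_ne_zero.2 (by omega)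
  set F : ℕ → ℂ := fun k =>
    (bseq n a k : ℂ) * Complex.exp (2 * Real.pi * Complex.I * (j:ℕ) * (k : ℕ) / (2 * n)) with hF
  have hsum : (∑ k : Fin (2*n), (bseq n a k : ℂ) *
      Complex.exp (2 * Real.pi * Complex.I * (j:ℕ) * ((k : ℕ) : ℂ) / (2 * n)))
      = ∑ k ∈ Finset.range (2*n), F k := Fin.sum_univ_eq_sum_range F (2*n)
  -- split the range
  have hsplit : ∑ k ∈ Finset.range (2*n), F k
      = ∑ k ∈ Finset.range (n+1), F k + ∑ k ∈ Finset.Ico (n+1) (2*n), F k := by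
    rw [Finset.range_eq_Ico, Finset.range_eq_Ico]
    exact (Finset.sum_Ico_consecutive F (by omega : 0 ≤ n+1) (by omega : n+1 ≤ 2*n)).symm
  -- tail sum
  have htail : ∑ k ∈ Finset.Ico (n+1) (2*n), F k
      = ∑ k ∈ Finset.Ico 1 n, (a k : ℂ) *
          Complex.exp (-(2 * Real.pi * Complex.I * (j:ℕ) * (k:ℕ) / (2 * n))) := by
    refine (Finset.sum_nbij' (fun k => 2*n - k) (fun k => 2*n - k) ?_ ?_ ?_ ?_ ?_).symm
    · intro k hk; simp only [Finset.mem_Ico] at *; omega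
    · intro k hk; simp only [Finset.mem_Ico] at *; omega
    · intro k hk; simp only [Finset.mem_Ico] at *; omega
    · intro k hk; simp only [Finset.mem_Ico] at *; omega
    · intro k hk
      simp only [Finset.mem_Ico] at hk
      have hb : bseq n a (2*n - k) = a k := by
        rw [bseq]
        rw [if_neg (by omega), if_neg (by omega), if_neg (by omega)]
        congr 1; omega
      have hc : ((2*n - k : ℕ) : ℂ) = 2*n - k := by
        push_cast [Nat.cast_sub (by omega : k ≤ 2*n)]; ring
      rw [hF]; simp only []
      rw [hb, hc]
      congr 1
      have : 2 * (Real.pi:ℂ) * Complex.I * (j:ℕ) * ((2*(n:ℂ)) - (k:ℕ)) / (2 * n)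
          = (j:ℕ) * (2 * (Real.pi:ℂ) * Complex.I)
            + -(2 * (Real.pi:ℂ) * Complex.I * (j:ℕ) * (k:ℕ) / (2 * n)) := by
        field_simp
        ring
      rw [this, Complex.exp_add, Complex.exp_nat_mul, Complex.exp_two_pi_mul_I, one_pow, one_mul]
  -- head sum
  have hhead : ∑ k ∈ Finset.range (n+1), F k
      = F 0 + ∑ k ∈ Finset.Ico 1 n, F k + F n := by
    rw [Finset.sum_range_succ]
    congr 1
    rw [Finset.range_eq_Ico, ← Finset.sum_Ico_consecutive F (by omega : 0 ≤ 1) (by omega : 1 ≤ n)]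
    congr 1
    rw [show Finset.Ico 0 1 = Finset.range 1 by rw [Finset.range_eq_Ico], Finset.sum_range_one]
  have hF0 : F 0 = (Real.sqrt 2 : ℂ) * a 0 := by
    simp [hF, bseq]
  have hFn : F n = (Real.sqrt 2 : ℂ) * a n * (-1:ℂ)^j := by
    have hb : bseq n a n = Real.sqrt 2 * a n := by
      rw [bseq, if_neg (by omega), if_pos rfl]
    have he : 2 * (Real.pi:ℂ) * Complex.I * (j:ℕ) * (n:ℕ) / (2 * n)
        = (j:ℕ) * ((Real.pi:ℂ) * Complex.I) := by
      field_simp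
    rw [hF]; simp only []
    rw [hb, he, Complex.exp_nat_mul, Complex.exp_pi_mul_I]
    push_cast
    ring
  -- pair sum
  have hpair : ∑ k ∈ Finset.Ico 1 n, F k
      + ∑ k ∈ Finset.Ico 1 n, (a k : ℂ) *
          Complex.exp (-(2 * Real.pi * Complex.I * (j:ℕ) * (k:ℕ) / (2 * n)))
      = ∑ k ∈ Finset.Ico 1 n, (a k : ℂ) * ((2 * Real.cos (2*Real.pi*j*k/(2*n)) : ℝ) : ℂ) := by
    rw [← Finset.sum_add_distrib]
    refine Finset.sum_congr rfl (fun k hk => ?_)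
    simp only [Finset.mem_Ico] at hk
    have hb : bseq n a k = a k := by
      rw [bseq, if_neg (by omega), if_neg (by omega), if_pos (by omega)]
    set θ : ℝ := 2*Real.pi*j*k/(2*n) with hθ
    have hθc : 2 * (Real.pi:ℂ) * Complex.I * (j:ℕ) * (k:ℕ) / (2 * n) = (θ:ℂ) * Complex.I := by
      rw [hθ]; push_cast; ring
    rw [hF]; simp only []
    rw [hb, hθc,
      show -((θ:ℂ) * Complex.I) = ((-θ : ℝ) : ℂ) * Complex.I by push_cast; ring,
      Complex.exp_mul_I, Complex.exp_mul_I]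
    push_cast [Complex.ofReal_cos, Complex.ofReal_sin]
    rw [Complex.cos_neg, Complex.sin_neg]
    ring
  -- put it together
  rw [dval, hsum, hsplit, hhead]
  rw [show F 0 + ∑ k ∈ Finset.Ico 1 n, F k + F n + ∑ k ∈ Finset.Ico (n+1) (2*n), F k
      = F 0 + F n + (∑ k ∈ Finset.Ico 1 n, F k + ∑ k ∈ Finset.Ico (n+1) (2*n), F k) by ring,
    htail, hpair, hF0, hFn]
  -- now the RHS
  have hrhs : ∑ k ∈ Finset.range (n+1), creal n j k * a k
      = creal n j 0 * a 0 + creal n j n * a n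
        + ∑ k ∈ Finset.Ico 1 n, ((Real.sqrt (2*n))⁻¹ * (2 * Real.cos (2*Real.pi*j*k/(2*n)))) * a k := by
    rw [Finset.sum_range_succ]
    rw [show ∑ k ∈ Finset.range n, creal n j k * a k
        = creal n j 0 * a 0 + ∑ k ∈ Finset.Ico 1 n, creal n j k * a k by
      rw [Finset.range_eq_Ico, ← Finset.sum_Ico_consecutive _ (by omega : 0 ≤ 1) (by omega : 1 ≤ n)]
      congr 1
      rw [show Finset.Ico 0 1 = Finset.range 1 by rw [Finset.range_eq_Ico], Finset.sum_range_one]]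
    rw [show ∑ k ∈ Finset.Ico 1 n, creal n j k * a k
        = ∑ k ∈ Finset.Ico 1 n, ((Real.sqrt (2*n))⁻¹ * (2 * Real.cos (2*Real.pi*j*k/(2*n)))) * a k by
      refine Finset.sum_congr rfl (fun k hk => ?_)
      simp only [Finset.mem_Ico] at hk
      rw [creal, if_neg (by omega), if_neg (by omega)]]
    ring
  rw [hrhs]
  rw [creal, creal, if_pos rfl, if_neg (by omega), if_pos rfl]
  push_cast
  rw [mul_add, mul_add, Finset.mul_sum]
  congr 1
  · ring
  · exact Finset.sum_congr rfl fun x _ => by ring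


lemma creal_symm (hn : 1 ≤ n) {j : ℕ} (hj0 : 0 < j) (hjn : j < n) (k : ℕ) :
    creal n (2*n - j) k = creal n j k := by
  have hnR : ((n:ℝ)) ≠ 0 := Nat.cast_ne_zero.2 (by omega)
  rw [creal, creal]
  congr 1
  by_cases hk0 : k = 0
  · simp [hk0]
  rw [if_neg hk0, if_neg hk0]
  by_cases hkn : k = n
  · rw [if_pos hkn, if_pos hkn]
    have h1 : (-1:ℝ)^(2*n-j) * (-1)^j = 1 := by
      rw [← pow_add, show 2*n - j + j = 2*n by omega, pow_mul]
      norm_num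
    have h2 : (-1:ℝ)^j * (-1)^j = 1 := by
      rw [← pow_add, ← two_mul, pow_mul]; norm_num
    have : (-1:ℝ)^(2*n-j) = (-1)^j :=
      calc (-1:ℝ)^(2*n-j) = (-1:ℝ)^(2*n-j) * ((-1:ℝ)^j * (-1:ℝ)^j) := by rw [h2, mul_one]
        _ = ((-1:ℝ)^(2*n-j) * (-1:ℝ)^j) * (-1:ℝ)^j := by ring
        _ = (-1:ℝ)^j := by rw [h1, one_mul]
    rw [this]
  · rw [if_neg hkn, if_neg hkn]
    have hcast : ((2*n - j:ℕ):ℝ) = 2*(n:ℝ) - j := by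
      push_cast [Nat.cast_sub (by omega : j ≤ 2*n)]; ring
    rw [hcast]
    have harg : 2*Real.pi*(2*(n:ℝ) - j)*k/(2*n) = (k:ℝ)*(2*Real.pi) - 2*Real.pi*j*k/(2*n) := by
      field_simp
    rw [harg, Real.cos_sub]
    have hcos1 : Real.cos ((k:ℝ)*(2*Real.pi)) = 1 := by
      exact_mod_cast Real.cos_int_mul_two_pi k
    have hsin0 : Real.sin ((k:ℝ)*(2*Real.pi)) = 0 := by
      rw [show (k:ℝ)*(2*Real.pi) = ((2*(k:ℤ) : ℤ):ℝ) * Real.pi by push_cast; ring]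
      exact Real.sin_int_mul_pi _
    rw [hcos1, hsin0]
    ring

lemma dval_symm (hn : 1 ≤ n) (a : ℕ → ℝ) {j : ℕ} (hj0 : 0 < j) (hjn : j < n) :
    dval n a (2*n - j) = dval n a j := by
  rw [dval_eq hn, dval_eq hn]
  norm_cast
  exact Finset.sum_congr rfl fun k _ => by rw [creal_symm hn hj0 hjn]

/-! ### roots of unity sums -/

def cex (n : ℕ) (m : ℤ) : ℂ := Complex.exp (2*Real.pi*Complex.I*(m:ℂ)/(2*(n:ℂ)))

lemma cex_add (m₁ m₂ : ℤ) : cex n (m₁+m₂) = cex n m₁ * cex n m₂ := by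
  rw [cex, cex, cex, ← Complex.exp_add]
  congr 1
  push_cast
  ring

lemma cex_zero : cex n 0 = 1 := by simp [cex]

lemma cex_period (hn : 1 ≤ n) (t : ℤ) : cex n (2*n*t) = 1 := by
  have hn0 : (n:ℂ) ≠ 0 := Nat.cast_ne_zero.2 (by omega)
  rw [cex, show 2*(Real.pi:ℂ)*Complex.I*((2*(n:ℤ)*t : ℤ):ℂ)/(2*(n:ℂ))
      = (t:ℂ)*(2*(Real.pi:ℂ)*Complex.I) by push_cast; field_simp]
  exact Complex.exp_int_mul_two_pi_mul_I t

lemma cex_pow (m : ℤ) (k : ℕ) : cex n (m*k) = cex n m ^ k := by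
  rw [cex, cex, ← Complex.exp_nat_mul]
  congr 1
  push_cast
  ring

lemma cex_geo (hn : 1 ≤ n) (m : ℤ) :
    ∑ k ∈ Finset.range (2*n), cex n (m*k) = if (2*(n:ℤ)) ∣ m then ((2*n:ℕ):ℂ) else 0 := by
  have hn0 : (n:ℂ) ≠ 0 := Nat.cast_ne_zero.2 (by omega)
  by_cases hd : (2*(n:ℤ)) ∣ m
  · obtain ⟨t, rfl⟩ := hd
    rw [if_pos ⟨t, rfl⟩]
    have h1 : cex n (2*(n:ℤ)*t) = 1 := cex_period hn t
    calc ∑ k ∈ Finset.range (2*n), cex n (2*(n:ℤ)*t*k)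
        = ∑ k ∈ Finset.range (2*n), (1:ℂ) := by
          refine Finset.sum_congr rfl fun k _ => ?_
          rw [cex_pow, h1, one_pow]
      _ = ((2*n:ℕ):ℂ) := by simp
  · rw [if_neg hd]
    have h1 : cex n m ≠ 1 := by
      intro h
      apply hd
      rw [cex, Complex.exp_eq_one_iff] at h
      obtain ⟨t, ht⟩ := h
      have h2 : (2*(Real.pi:ℂ)*Complex.I) * m = (2*(Real.pi:ℂ)*Complex.I) * (t*(2*n)) := by
        have hne : (2*(n:ℂ)) ≠ 0 := by simpa using hn0
        field_simp at ht
        linear_combination (2*(Real.pi:ℂ)*Complex.I) * ht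
      have h3 : (m:ℂ) = (t:ℂ)*(2*(n:ℂ)) :=
        mul_left_cancel₀ (by simp [Real.pi_ne_zero, Complex.I_ne_zero, Complex.ofReal_ne_zero]) h2
      have h4 : m = t*(2*(n:ℤ)) := by exact_mod_cast h3
      exact ⟨t, by linarith⟩
    have h2 : cex n m ^ (2*n) = 1 := by
      rw [← cex_pow, show m * ((2*n:ℕ):ℤ) = 2*(n:ℤ)*m by push_cast; ring]
      exact cex_period hn m
    calc ∑ k ∈ Finset.range (2*n), cex n (m*k)
        = ∑ k ∈ Finset.range (2*n), cex n m ^ k :=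
          Finset.sum_congr rfl fun k _ => cex_pow m k
      _ = (cex n m ^ (2*n) - 1)/(cex n m - 1) := geom_sum_eq h1 (2*n)
      _ = 0 := by rw [h2]; simp

lemma cex_mul_n (hn : 1 ≤ n) (m : ℤ) : cex n (m*n) = (-1:ℂ)^m := by
  have hn0 : (n:ℂ) ≠ 0 := Nat.cast_ne_zero.2 (by omega)
  rw [cex, show 2*(Real.pi:ℂ)*Complex.I*((m*(n:ℤ):ℤ):ℂ)/(2*(n:ℂ))
      = (m:ℂ)*((Real.pi:ℂ)*Complex.I) by push_cast; field_simp,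
    Complex.exp_int_mul, Complex.exp_pi_mul_I]

lemma sum_range_two_n (hn : 1 ≤ n) (g : ℕ → ℂ) :
    ∑ k ∈ Finset.range (2*n), g k
      = g 0 + ∑ k ∈ Finset.Ico 1 n, g k + g n + ∑ k ∈ Finset.Ico (n+1) (2*n), g k := by
  have e1 : ∑ k ∈ Finset.Ico 0 (n+1), g k + ∑ k ∈ Finset.Ico (n+1) (2*n), g k
      = ∑ k ∈ Finset.Ico 0 (2*n), g k := Finset.sum_Ico_consecutive g (by omega) (by omega)
  have e2 : ∑ k ∈ Finset.Ico 0 n, g k + ∑ k ∈ Finset.Ico n (n+1), g k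
      = ∑ k ∈ Finset.Ico 0 (n+1), g k := Finset.sum_Ico_consecutive g (by omega) (by omega)
  have e3 : ∑ k ∈ Finset.Ico 0 1, g k + ∑ k ∈ Finset.Ico 1 n, g k
      = ∑ k ∈ Finset.Ico 0 n, g k := Finset.sum_Ico_consecutive g (by omega) (by omega)
  have h1 : ∑ k ∈ Finset.Ico 0 1, g k = g 0 := by
    rw [show Finset.Ico 0 1 = Finset.range 1 by rw [Finset.range_eq_Ico], Finset.sum_range_one]
  have h2 : ∑ k ∈ Finset.Ico n (n+1), g k = g n := by
    rw [Nat.Ico_succ_singleton, Finset.sum_singleton]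
  rw [Finset.range_eq_Ico]
  rw [h1] at e3
  rw [h2] at e2
  linear_combination -e1 - e2 - e3

lemma cex_pair (hn : 1 ≤ n) (m : ℤ) :
    ∑ k ∈ Finset.Ico 1 n, (cex n (m*k) + cex n (-(m*k)))
      = (if (2*(n:ℤ)) ∣ m then ((2*n:ℕ):ℂ) else 0) - 1 - (-1:ℂ)^m := by
  have hrev : ∑ k ∈ Finset.Ico 1 n, cex n (-(m*k))
      = ∑ k ∈ Finset.Ico (n+1) (2*n), cex n (m*k) := by
    refine Finset.sum_nbij' (fun k => 2*n - k) (fun k => 2*n - k) ?_ ?_ ?_ ?_ ?_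
    · intro k hk; simp only [Finset.mem_Ico] at *; omega
    · intro k hk; simp only [Finset.mem_Ico] at *; omega
    · intro k hk; simp only [Finset.mem_Ico] at *; omega
    · intro k hk; simp only [Finset.mem_Ico] at *; omega
    · intro k hk
      simp only [Finset.mem_Ico] at hk
      rw [show (m * ((2*n - k:ℕ):ℤ)) = 2*(n:ℤ)*m + (-(m*k)) by
        push_cast [Nat.cast_sub (by omega : k ≤ 2*n)]; ring, cex_add, cex_period hn, one_mul]
  have hgeo := cex_geo hn m
  rw [sum_range_two_n hn (fun k => cex n (m*k))] at hgeo
  have h0 : cex n (m*(0:ℕ)) = 1 := by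
    rw [show m*((0:ℕ):ℤ) = 0 by simp, cex_zero]
  have hn' : cex n (m*(n:ℕ)) = (-1:ℂ)^m := cex_mul_n hn m
  rw [Finset.sum_add_distrib, hrev]
  rw [h0, hn'] at hgeo
  linear_combination hgeo

lemma cex_cos (hn : 1 ≤ n) (m : ℤ) :
    cex n m + cex n (-m) = ((2 * Real.cos (2*Real.pi*m/(2*(n:ℝ))) : ℝ) : ℂ) := by
  set θ : ℝ := 2*Real.pi*m/(2*(n:ℝ)) with hθ
  have h1 : cex n m = Complex.exp ((θ:ℂ) * Complex.I) := by
    rw [cex]; congr 1; rw [hθ]; push_cast; ring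
  have h2 : cex n (-m) = Complex.exp (((-θ:ℝ):ℂ) * Complex.I) := by
    rw [cex]; congr 1; rw [hθ]; push_cast; ring
  rw [h1, h2, Complex.exp_mul_I, Complex.exp_mul_I]
  push_cast [Complex.ofReal_cos, Complex.ofReal_sin]
  rw [Complex.cos_neg, Complex.sin_neg]
  ring

lemma creal_orth (hn : 1 ≤ n) {j j' : ℕ} (hj : j ≤ n) (hj' : j' ≤ n) :
    ∑ k ∈ Finset.range (n+1), creal n j k * creal n j' k
      = if j = j' then (if j = 0 ∨ j = n then 2 else 1) else 0 := by
  have hnR : (0:ℝ) < (n:ℝ) := by exact_mod_cast (by omega : 0 < n)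
  have hn0C : (n:ℂ) ≠ 0 := Nat.cast_ne_zero.2 (by omega)
  have hs1 : Real.sqrt (2*n) * Real.sqrt (2*n) = 2*(n:ℝ) := Real.mul_self_sqrt (by positivity)
  have hs2 : Real.sqrt 2 * Real.sqrt 2 = 2 := Real.mul_self_sqrt (by norm_num)
  set m₁ : ℤ := (j:ℤ) + (j':ℤ) with hm₁
  set m₂ : ℤ := (j:ℤ) - (j':ℤ) with hm₂
  set D₁ : ℂ := if (2*(n:ℤ)) ∣ m₁ then ((2*n:ℕ):ℂ) else 0 with hD₁
  set D₂ : ℂ := if (2*(n:ℤ)) ∣ m₂ then ((2*n:ℕ):ℂ) else 0 with hD₂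
  -- the key complex identity
  have key : ((∑ k ∈ Finset.range (n+1), creal n j k * creal n j' k : ℝ) : ℂ)
      = (2*(n:ℂ))⁻¹ * (D₁ + D₂) := by
    have hsplit : ∑ k ∈ Finset.range (n+1), creal n j k * creal n j' k
        = creal n j 0 * creal n j' 0 + creal n j n * creal n j' n
          + ∑ k ∈ Finset.Ico 1 n, creal n j k * creal n j' k := by
      rw [Finset.sum_range_succ]
      rw [show ∑ k ∈ Finset.range n, creal n j k * creal n j' k
          = creal n j 0 * creal n j' 0 + ∑ k ∈ Finset.Ico 1 n, creal n j k * creal n j' k by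
        rw [Finset.range_eq_Ico,
          ← Finset.sum_Ico_consecutive _ (by omega : 0 ≤ 1) (by omega : 1 ≤ n)]
        congr 1
        rw [show Finset.Ico 0 1 = Finset.range 1 by rw [Finset.range_eq_Ico],
          Finset.sum_range_one]]
      ring
    have h00 : creal n j 0 * creal n j' 0 = (2*(n:ℝ))⁻¹ * 2 := by
      rw [creal, creal, if_pos rfl, if_pos rfl]
      calc (Real.sqrt (2*n))⁻¹ * Real.sqrt 2 * ((Real.sqrt (2*n))⁻¹ * Real.sqrt 2)
          = ((Real.sqrt (2*n))⁻¹ * (Real.sqrt (2*n))⁻¹) * (Real.sqrt 2 * Real.sqrt 2) := by ring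
        _ = (2*(n:ℝ))⁻¹ * 2 := by rw [← mul_inv, hs1, hs2]
    have hnn : creal n j n * creal n j' n = (2*(n:ℝ))⁻¹ * 2 * ((-1:ℝ)^j * (-1:ℝ)^j') := by
      rw [creal, creal, if_neg (by omega), if_pos rfl, if_neg (by omega), if_pos rfl]
      calc (Real.sqrt (2*n))⁻¹ * (Real.sqrt 2 * (-1:ℝ)^j)
            * ((Real.sqrt (2*n))⁻¹ * (Real.sqrt 2 * (-1:ℝ)^j'))
          = ((Real.sqrt (2*n))⁻¹ * (Real.sqrt (2*n))⁻¹) * (Real.sqrt 2 * Real.sqrt 2)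
              * ((-1:ℝ)^j * (-1:ℝ)^j') := by ring
        _ = _ := by rw [← mul_inv, hs1, hs2]
    have hterm : ∀ k ∈ Finset.Ico 1 n,
        ((creal n j k * creal n j' k : ℝ) : ℂ)
          = (2*(n:ℂ))⁻¹ * ((cex n (m₁*k) + cex n (-(m₁*k))) + (cex n (m₂*k) + cex n (-(m₂*k)))) := by
      intro k hk
      simp only [Finset.mem_Ico] at hk
      have hreal : creal n j k * creal n j' k
          = (2*(n:ℝ))⁻¹ * (2*Real.cos (2*Real.pi*(m₁*k)/(2*(n:ℝ)))
              + 2*Real.cos (2*Real.pi*(m₂*k)/(2*(n:ℝ)))) := by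
        rw [creal, creal, if_neg (by omega), if_neg (by omega), if_neg (by omega),
          if_neg (by omega)]
        set A : ℝ := 2*Real.pi*j*k/(2*(n:ℝ)) with hA
        set B : ℝ := 2*Real.pi*j'*k/(2*(n:ℝ)) with hB
        have e1 : 2*Real.pi*((m₁:ℝ)*k)/(2*(n:ℝ)) = A + B := by
          rw [hA, hB, hm₁]; push_cast; field_simp
        have e2 : 2*Real.pi*((m₂:ℝ)*k)/(2*(n:ℝ)) = A - B := by
          rw [hA, hB, hm₂]; push_cast; field_simp
        rw [e1, e2, Real.cos_add, Real.cos_sub]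
        calc (Real.sqrt (2*n))⁻¹ * (2*Real.cos A) * ((Real.sqrt (2*n))⁻¹ * (2*Real.cos B))
            = ((Real.sqrt (2*n))⁻¹ * (Real.sqrt (2*n))⁻¹) * (4 * Real.cos A * Real.cos B) := by
              ring
          _ = (2*(n:ℝ))⁻¹ * (4 * Real.cos A * Real.cos B) := by rw [← mul_inv, hs1]
          _ = _ := by ring
      rw [hreal, cex_cos hn (m₁*k), cex_cos hn (m₂*k)]
      push_cast
      ring
    have hP1 : (-1:ℂ)^m₁ = (-1:ℂ)^j * (-1:ℂ)^j' := by
      rw [hm₁, zpow_add₀ (by norm_num : (-1:ℂ) ≠ 0), zpow_natCast, zpow_natCast]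
    have hP2 : (-1:ℂ)^m₂ = (-1:ℂ)^j * (-1:ℂ)^j' := by
      rw [hm₂, zpow_sub₀ (by norm_num : (-1:ℂ) ≠ 0), zpow_natCast, zpow_natCast,
        div_eq_mul_inv, ← inv_pow, show ((-1:ℂ))⁻¹ = -1 by norm_num]
    rw [hsplit, h00, hnn]
    rw [Complex.ofReal_add, Complex.ofReal_add, Complex.ofReal_sum]
    rw [Finset.sum_congr rfl hterm, ← Finset.mul_sum, Finset.sum_add_distrib,
      cex_pair hn m₁, cex_pair hn m₂, ← hD₁, ← hD₂, hP1, hP2]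
    push_cast
    ring
  -- now case analysis
  have hcast2n : ((2*n:ℕ):ℂ) = 2*(n:ℂ) := by push_cast; ring
  have h2n0 : (2*(n:ℂ)) ≠ 0 := by
    intro h; apply hn0C; linear_combination h / 2
  by_cases hjj : j = j'
  · subst hjj
    have hdvd2 : (2*(n:ℤ)) ∣ m₂ := by rw [hm₂, sub_self]; exact dvd_zero _
    rw [if_pos rfl]
    by_cases h0n : j = 0 ∨ j = n
    · have hdvd1 : (2*(n:ℤ)) ∣ m₁ := by
        rcases h0n with h | h <;> subst h
        · exact ⟨0, by simp [hm₁]⟩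
        · exact ⟨1, by rw [hm₁]; push_cast; ring⟩
      rw [if_pos h0n]
      rw [hD₁, hD₂, if_pos hdvd1, if_pos hdvd2, hcast2n] at key
      have : ((∑ k ∈ Finset.range (n+1), creal n j k * creal n j k : ℝ) : ℂ) = ((2:ℝ):ℂ) := by
        rw [key]; push_cast; rw [inv_mul_eq_iff_eq_mul₀ h2n0]; ring
      exact_mod_cast this
    · have hdvd1 : ¬ (2*(n:ℤ)) ∣ m₁ := by
        rintro ⟨t, ht⟩
        rw [hm₁] at ht
        have hj0 : 0 < j := by omega
        have hjn : j < n := by omega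
        have hjZ : 0 < (j:ℤ) := by exact_mod_cast hj0
        have hjnZ : (j:ℤ) < n := by exact_mod_cast hjn
        have ht0 : 0 ≤ t := by nlinarith
        have ht1 : t ≤ 0 := by nlinarith
        have : t = 0 := le_antisymm ht1 ht0
        subst this
        omega
      rw [if_neg h0n]
      rw [hD₁, hD₂, if_neg hdvd1, if_pos hdvd2, hcast2n] at key
      have : ((∑ k ∈ Finset.range (n+1), creal n j k * creal n j k : ℝ) : ℂ) = ((1:ℝ):ℂ) := by
        rw [key]; push_cast; rw [inv_mul_eq_iff_eq_mul₀ h2n0]; ring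
      exact_mod_cast this
  · have hjZ : (j:ℤ) ≤ n := by exact_mod_cast hj
    have hj'Z : (j':ℤ) ≤ n := by exact_mod_cast hj'
    have hjj'Z : (j:ℤ) ≠ (j':ℤ) := by exact_mod_cast hjj
    have hdvd2 : ¬ (2*(n:ℤ)) ∣ m₂ := by
      rintro ⟨t, ht⟩
      rw [hm₂] at ht
      have h1 : 0 ≤ (j:ℤ) := Int.ofNat_nonneg j
      have h2 : 0 ≤ (j':ℤ) := Int.ofNat_nonneg j'
      have ht0 : 0 ≤ t := by nlinarith
      have ht1 : t ≤ 0 := by nlinarith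
      have : t = 0 := le_antisymm ht1 ht0
      subst this
      apply hjj'Z
      omega
    have hdvd1 : ¬ (2*(n:ℤ)) ∣ m₁ := by
      rintro ⟨t, ht⟩
      rw [hm₁] at ht
      have h1 : 0 ≤ (j:ℤ) := Int.ofNat_nonneg j
      have h2 : 0 ≤ (j':ℤ) := Int.ofNat_nonneg j'
      have hnZ : (1:ℤ) ≤ n := by exact_mod_cast hn
      have ht0 : 0 ≤ t := by nlinarith
      have ht1 : t ≤ 1 := by nlinarith
      interval_cases t
      · omega
      · omega
    rw [if_neg hjj]
    rw [hD₁, hD₂, if_neg hdvd1, if_neg hdvd2] at key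
    have : ((∑ k ∈ Finset.range (n+1), creal n j k * creal n j' k : ℝ) : ℂ) = ((0:ℝ):ℂ) := by
      rw [key]; simp
    exact_mod_cast this

end DvalAux

namespace ProbAux

variable {α β : Type*} [MeasurableSpace α] [MeasurableSpace β]

lemma map_withDensity (e : α ≃ᵐ β) (μ : Measure α) (h : α → ℝ≥0∞) (hh : Measurable h) :
    Measure.map e (μ.withDensity h) = (Measure.map e μ).withDensity (h ∘ e.symm) := by
  ext s hs
  rw [Measure.map_apply e.measurable hs, withDensity_apply _ (e.measurable hs),
    withDensity_apply _ hs,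
    MeasureTheory.setLIntegral_map hs (hh.comp e.symm.measurable) e.measurable]
  refine lintegral_congr fun x => ?_
  simp

lemma lintegral_pi_prod {m : ℕ} (μ : Fin m → Measure ℝ) [∀ i, SigmaFinite (μ i)]
    (F : Fin m → ℝ → ℝ≥0∞) (hF : ∀ i, Measurable (F i)) :
    ∫⁻ x, ∏ i, F i (x i) ∂Measure.pi μ = ∏ i, ∫⁻ t, F i t ∂(μ i) := by
  classical
  have hmeas : Measurable (fun y : Fin m → ℝ => ∏ i, F i (y i)) :=
    Finset.measurable_prod Finset.univ (fun i _ => (hF i).comp (measurable_pi_apply i))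
  have main : ∀ s : Finset (Fin m), ∀ x,
      (∫⋯∫⁻_s, (fun y => ∏ i, F i (y i)) ∂μ) x
        = (∏ i ∈ s, ∫⁻ t, F i t ∂(μ i)) * ∏ i ∈ sᶜ, F i (x i) := by
    intro s
    induction s using Finset.induction_on with
    | empty => intro x; rw [MeasureTheory.lmarginal_empty]; simp
    | @insert a s ha ih =>
      intro x
      rw [MeasureTheory.lmarginal_insert _ hmeas ha]
      have hstep : ∀ t : ℝ,
          (∫⋯∫⁻_s, (fun y => ∏ i, F i (y i)) ∂μ) (Function.update x a t)
            = ((∏ i ∈ s, ∫⁻ u, F i u ∂(μ i)) * ∏ i ∈ sᶜ.erase a, F i (x i)) * F a t := by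
        intro t
        rw [ih (Function.update x a t)]
        rw [← Finset.mul_prod_erase _ _ (Finset.mem_compl.2 ha)]
        rw [Function.update_self]
        have : ∏ i ∈ sᶜ.erase a, F i (Function.update x a t i)
            = ∏ i ∈ sᶜ.erase a, F i (x i) :=
          Finset.prod_congr rfl fun i hi => by
            rw [Function.update_of_ne (Finset.ne_of_mem_erase hi)]
        rw [this]
        ring
      simp_rw [hstep]
      rw [lintegral_const_mul _ (hF a)]
      rw [Finset.prod_insert ha, Finset.compl_insert]
      ring
  rw [MeasureTheory.lintegral_eq_lmarginal_univ (fun _ => (0:ℝ)), main Finset.univ]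
  simp

/-- the standard Gaussian product measure -/
def stdg (m : ℕ) : Measure (Fin m → ℝ) := Measure.pi (fun _ => gaussianReal 0 1)

instance (m : ℕ) : IsProbabilityMeasure (stdg m) := by
  unfold stdg; infer_instance

lemma stdg_eq (m : ℕ) :
    stdg m = (volume : Measure (Fin m → ℝ)).withDensity
      (fun x => ∏ i, gaussianPDF 0 1 (x i)) := by
  refine Measure.pi_eq fun s hs => ?_
  rw [withDensity_apply _ (MeasurableSet.univ_pi hs), ← lintegral_indicator (MeasurableSet.univ_pi hs)]
  have hind : (Set.univ.pi s).indicator (fun x : Fin m → ℝ => ∏ i, gaussianPDF 0 1 (x i))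
      = fun x => ∏ i, (s i).indicator (gaussianPDF 0 1) (x i) := by
    funext x
    by_cases hx : x ∈ Set.univ.pi s
    · rw [Set.indicator_of_mem hx]
      exact Finset.prod_congr rfl fun i _ =>
        (Set.indicator_of_mem (hx i (Set.mem_univ i)) _).symm
    · rw [Set.indicator_of_notMem hx]
      rw [Set.mem_univ_pi] at hx
      push_neg at hx
      obtain ⟨i, hi⟩ := hx
      exact (Finset.prod_eq_zero (Finset.mem_univ i) (Set.indicator_of_notMem hi _)).symm
  rw [hind, volume_pi, lintegral_pi_prod _ _ (fun i => (measurable_gaussianPDF 0 1).indicator (hs i))]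
  exact Finset.prod_congr rfl fun i _ => by
    rw [lintegral_indicator (hs i), gaussianReal_apply 0 one_ne_zero]

lemma prod_pdf_eq {m : ℕ} (x : Fin m → ℝ) :
    ∏ i, gaussianPDF 0 1 (x i)
      = ENNReal.ofReal (((Real.sqrt (2*Real.pi))⁻¹)^m * Real.exp (-(∑ i, (x i)^2)/2)) := by
  rw [show (fun i => gaussianPDF 0 1 (x i)) = fun i => ENNReal.ofReal (gaussianPDFReal 0 1 (x i))
    from rfl]
  rw [← ENNReal.ofReal_prod_of_nonneg (fun i _ => gaussianPDFReal_nonneg 0 1 (x i))]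
  congr 1
  unfold gaussianPDFReal
  rw [Finset.prod_mul_distrib, Finset.prod_const, ← Real.exp_sum]
  simp only [NNReal.coe_one, mul_one, sub_zero, Finset.card_univ, Fintype.card_fin]
  congr 2
  rw [← Finset.sum_div, Finset.sum_neg_distrib, neg_div]


lemma map_stdg_of_invariant {m : ℕ} (e : (Fin m → ℝ) ≃ᵐ (Fin m → ℝ))
    (hvol : MeasurePreserving e (volume : Measure (Fin m → ℝ)) volume)
    (hnorm : ∀ x, ∑ i, (e.symm x i)^2 = ∑ i, (x i)^2) :
    Measure.map e (stdg m) = stdg m := by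
  have hG : Measurable (fun x : Fin m → ℝ => ∏ i, gaussianPDF 0 1 (x i)) :=
    Finset.measurable_prod Finset.univ
      (fun i _ => (measurable_gaussianPDF 0 1).comp (measurable_pi_apply i))
  have hfun : ((fun x : Fin m → ℝ => ∏ i, gaussianPDF 0 1 (x i)) ∘ ⇑e.symm)
      = fun x : Fin m → ℝ => ∏ i, gaussianPDF 0 1 (x i) := by
    funext x
    simp only [Function.comp_apply]
    rw [prod_pdf_eq, prod_pdf_eq, hnorm]
  rw [stdg_eq, map_withDensity e _ _ hG, hvol.map_eq, hfun, ← stdg_eq]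


lemma map_stdg_of_orthonormal {m : ℕ} (hm : 0 < m) (O : Fin m → Fin m → ℝ)
    (horth : ∀ j j', ∑ k, O j k * O j' k = if j = j' then (1:ℝ) else 0) :
    Measure.map (fun x : Fin m → ℝ => fun j => ∑ k, O j k * x k) (stdg m) = stdg m := by
  classical
  haveI : Nonempty (Fin m) := ⟨⟨0, hm⟩⟩
  let v : Fin m → EuclideanSpace ℝ (Fin m) := fun j => (WithLp.equiv 2 (Fin m → ℝ)).symm (O j)
  have hvapp : ∀ j k, v j k = O j k := fun j k => rfl
  have hv : Orthonormal ℝ v := by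
    rw [orthonormal_iff_ite]
    intro j j'
    rw [PiLp.inner_apply]
    simp only [RCLike.inner_apply, conj_trivial]
    simpa [hvapp, mul_comm] using horth j j'
  have hcard : Fintype.card (Fin m) = Module.finrank ℝ (EuclideanSpace ℝ (Fin m)) := by
    simp [finrank_euclideanSpace]
  let b0 : Module.Basis (Fin m) ℝ (EuclideanSpace ℝ (Fin m)) := basisOfLinearIndependentOfCardEqFinrank hv.linearIndependent hcard
  have hb0 : ⇑b0 = v := coe_basisOfLinearIndependentOfCardEqFinrank hv.linearIndependent hcard
  let B : OrthonormalBasis (Fin m) ℝ (EuclideanSpace ℝ (Fin m)) := b0.toOrthonormalBasis (hb0 ▸ hv)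
  have hB : ⇑B = v := by rw [Module.Basis.coe_toOrthonormalBasis, hb0]
  let eqv : EuclideanSpace ℝ (Fin m) ≃ᵐ (Fin m → ℝ) := (MeasurableEquiv.toLp 2 (Fin m → ℝ)).symm
  let e : (Fin m → ℝ) ≃ᵐ (Fin m → ℝ) := (eqv.symm.trans B.repr.toMeasurableEquiv).trans eqv
  have heqv : ∀ y : EuclideanSpace ℝ (Fin m), ∀ i, eqv y i = y i := fun y i => rfl
  have heqvs : ∀ y : Fin m → ℝ, ∀ i, (eqv.symm y) i = y i := fun y i => rfl
  have hecoe : ∀ x : Fin m → ℝ, e x = eqv (B.repr (eqv.symm x)) := fun x => rfl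
  have hesymm : ∀ x : Fin m → ℝ, e.symm x = eqv (B.repr.symm (eqv.symm x)) := fun x => rfl
  have hqvol : MeasurePreserving eqv (volume : Measure (EuclideanSpace ℝ (Fin m))) (volume : Measure (Fin m → ℝ)) :=
    EuclideanSpace.volume_preserving_symm_measurableEquiv_toLp (Fin m)
  have hrvol : MeasurePreserving (⇑B.repr) (volume : Measure (EuclideanSpace ℝ (Fin m))) (volume : Measure (EuclideanSpace ℝ (Fin m))) :=
    B.measurePreserving_repr
  have hvol : MeasurePreserving e (volume : Measure (Fin m → ℝ)) volume := by
    have h1 : MeasurePreserving (⇑eqv ∘ (⇑B.repr ∘ ⇑eqv.symm))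
        (volume : Measure (Fin m → ℝ)) volume :=
      hqvol.comp (hrvol.comp (hqvol.symm eqv))
    exact h1
  have hsq : ∀ y : EuclideanSpace ℝ (Fin m), ∑ i, (y i)^2 = ‖y‖^2 := by
    intro y
    rw [EuclideanSpace.norm_eq, Real.sq_sqrt (by positivity)]
    exact Finset.sum_congr rfl fun i _ => by rw [Real.norm_eq_abs, sq_abs]
  have hnorm : ∀ x : Fin m → ℝ, ∑ i, (e.symm x i)^2 = ∑ i, (x i)^2 := by
    intro x
    have h1 : ∀ i, e.symm x i = (B.repr.symm (eqv.symm x)) i := fun i => rfl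
    simp_rw [h1]
    rw [hsq (B.repr.symm (eqv.symm x)), LinearIsometryEquiv.norm_map, ← hsq (eqv.symm x)]
    exact Finset.sum_congr rfl fun i _ => by rw [heqvs]
  have hfun : (fun x : Fin m → ℝ => fun j => ∑ k, O j k * x k) = ⇑e := by
    funext x
    funext j
    have h1 : e x j = B.repr (eqv.symm x) j := rfl
    rw [h1, B.repr_apply_apply, hB]
    rw [PiLp.inner_apply]
    simp only [RCLike.inner_apply, conj_trivial]
    exact Finset.sum_congr rfl fun k _ => by rw [hvapp]; exact mul_comm _ _
  rw [hfun]
  exact map_stdg_of_invariant e hvol hnorm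

variable {Ω : Type*} [MeasureSpace Ω] [IsProbabilityMeasure (ℙ : Measure Ω)]

lemma joint_law {m : ℕ} (a : ℕ → Ω → ℝ) (ha_meas : ∀ j, Measurable (a j))
    (ha_indep : iIndepFun a ℙ)
    (ha_gauss : ∀ j, Measure.map (a j) ℙ = gaussianReal 0 1) :
    Measure.map (fun ω (i : Fin m) => a i ω) ℙ = stdg m := by
  classical
  have hA : Measurable (fun ω (i : Fin m) => a i ω) :=
    measurable_pi_iff.2 fun i => ha_meas i
  refine (Measure.pi_eq fun s hs => ?_).symm
  rw [Measure.map_apply hA (MeasurableSet.univ_pi hs)]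
  set t : ℕ → Set ℝ := fun i => if h : i < m then s ⟨i, h⟩ else Set.univ with ht
  have hset : (fun ω (i : Fin m) => a (i:ℕ) ω) ⁻¹' (Set.univ.pi s)
      = ⋂ i ∈ Finset.range m, a i ⁻¹' t i := by
    ext ω
    simp only [Set.mem_preimage, Set.mem_univ_pi, Set.mem_iInter, Finset.mem_range]
    constructor
    · intro h i hi
      simp only [ht, Set.mem_preimage, dif_pos hi]
      exact h ⟨i, hi⟩
    · intro h i
      have := h i.1 i.2
      simp only [ht, Set.mem_preimage, dif_pos i.2] at this
      simpa using this
  rw [hset]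
  rw [ha_indep.measure_inter_preimage_eq_mul (Finset.range m) (sets := t)
    (fun i hi => by
      simp only [Finset.mem_range] at hi
      simp only [ht, dif_pos hi]
      exact hs _)]
  rw [← Fin.prod_univ_eq_prod_range (fun i => ℙ (a i ⁻¹' t i)) m]
  refine Finset.prod_congr rfl fun i _ => ?_
  have h1 : t i.1 = s i := by
    simp only [ht, dif_pos i.2]
  rw [h1, ← Measure.map_apply (ha_meas i) (hs i), ha_gauss]

lemma indep_of_map_pi {m : ℕ} (X : Fin m → Ω → ℝ) (hX : ∀ i, Measurable (X i))
    (hmap : Measure.map (fun ω i => X i ω) ℙ = stdg m) :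
    iIndepFun X ℙ ∧ ∀ i, Measure.map (X i) ℙ = gaussianReal 0 1 := by
  classical
  have hJ : Measurable (fun ω (i : Fin m) => X i ω) := measurable_pi_iff.2 hX
  have hmarg : ∀ (i : Fin m) (s : Set ℝ), MeasurableSet s →
      ℙ (X i ⁻¹' s) = gaussianReal 0 1 s := by
    intro i s hs
    have h1 : X i ⁻¹' s = (fun ω (k : Fin m) => X k ω) ⁻¹' (Function.eval i ⁻¹' s) := rfl
    rw [h1, ← Measure.map_apply hJ ((measurable_pi_apply i) hs), hmap]
    rw [Set.eval_preimage, stdg, Measure.pi_pi]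
    rw [Finset.prod_eq_single i
      (fun k _ hk => by rw [Function.update_of_ne hk]; exact measure_univ)
      (fun h => absurd (Finset.mem_univ i) h)]
    rw [Function.update_self]
  constructor
  · rw [iIndepFun_iff_measure_inter_preimage_eq_mul]
    intro S sets hsets
    set t : Fin m → Set ℝ := fun i => if i ∈ S then sets i else Set.univ with ht
    have htm : ∀ i, MeasurableSet (t i) := fun i => by
      by_cases hi : i ∈ S
      · simpa [ht, hi] using hsets i hi
      · simp [ht, hi]
    have hset : (⋂ i ∈ S, X i ⁻¹' sets i) = (fun ω i => X i ω) ⁻¹' (Set.univ.pi t) := by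
      ext ω
      simp only [Set.mem_iInter, Set.mem_preimage, Set.mem_univ_pi]
      constructor
      · intro h i
        by_cases hi : i ∈ S
        · simpa [ht, hi] using h i hi
        · simp [ht, hi]
      · intro h i hi
        have := h i
        simpa [ht, hi] using this
    rw [hset, ← Measure.map_apply hJ (MeasurableSet.univ_pi htm), hmap, stdg, Measure.pi_pi]
    have hfac : ∀ i : Fin m, (gaussianReal 0 1) (t i)
        = if i ∈ S then ℙ (X i ⁻¹' sets i) else 1 := by
      intro i
      by_cases hi : i ∈ S
      · rw [if_pos hi]
        simp only [ht, if_pos hi]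
        exact (hmarg i (sets i) (hsets i hi)).symm
      · rw [if_neg hi]
        simp only [ht, if_neg hi]
        exact measure_univ
    rw [Finset.prod_congr rfl (fun i _ => hfac i), Finset.prod_ite_mem, Finset.univ_inter]
  · intro i
    ext s hs
    rw [Measure.map_apply (hX i) hs]
    exact hmarg i s hs

end ProbAux

/-- for i.i.d. standard Gaussians `(a_j)`, the `d_j` are real valued,
`d_0, …, d_n` are independent centered Gaussians with variance `1` for `0 < j < n` and
variance `2` for `j ∈ {0, n}`, and `d_{2n-j} = d_j` for `0 < j < n`. -/
theorem dval_real_independent_gaussian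
    {Ω : Type*} [MeasureSpace Ω] [IsProbabilityMeasure (ℙ : Measure Ω)]
    (a : ℕ → Ω → ℝ) (ha_meas : ∀ j, Measurable (a j))
    (ha_indep : iIndepFun a ℙ)
    (ha_gauss : ∀ j, Measure.map (a j) ℙ = gaussianReal 0 1)
    (n : ℕ) (hn : 1 ≤ n) :
    (∀ j : ℕ, j < 2 * n → ∀ ω, (dval n (fun i => a i ω) j).im = 0) ∧
    iIndepFun
      (fun (j : Fin (n + 1)) ω => (dval n (fun i => a i ω) (j : ℕ)).re) ℙ ∧
    (∀ j : ℕ, 0 < j → j < n →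
      Measure.map (fun ω => (dval n (fun i => a i ω) j).re) ℙ = gaussianReal 0 1) ∧
    (Measure.map (fun ω => (dval n (fun i => a i ω) 0).re) ℙ = gaussianReal 0 2) ∧
    (Measure.map (fun ω => (dval n (fun i => a i ω) n).re) ℙ = gaussianReal 0 2) ∧
    (∀ j : ℕ, 0 < j → j < n → ∀ ω,
      dval n (fun i => a i ω) (2 * n - j) = dval n (fun i => a i ω) j) := by
  classical
  set σf : Fin (n+1) → ℝ := fun j => if (j:ℕ) = 0 ∨ (j:ℕ) = n then Real.sqrt 2 else 1 with hσ
  have hσpos : ∀ j, 0 < σf j := fun j => by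
    rw [hσ]; dsimp only; split
    · exact Real.sqrt_pos.2 (by norm_num)
    · norm_num
  have hσne : ∀ j, σf j ≠ 0 := fun j => (hσpos j).ne'
  set O : Fin (n+1) → Fin (n+1) → ℝ := fun j k => (σf j)⁻¹ * DvalAux.creal n j k with hO
  have horth : ∀ j j', ∑ k, O j k * O j' k = if j = j' then (1:ℝ) else 0 := by
    intro j j'
    have h1 : ∑ k : Fin (n+1), O j k * O j' k
        = (σf j)⁻¹ * (σf j')⁻¹
          * ∑ k ∈ Finset.range (n+1), DvalAux.creal n j k * DvalAux.creal n j' k := by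
      rw [← Fin.sum_univ_eq_sum_range (fun k => DvalAux.creal n ↑j k * DvalAux.creal n ↑j' k) (n+1),
        Finset.mul_sum]
      exact Finset.sum_congr rfl fun k _ => by rw [hO]; ring
    rw [h1, DvalAux.creal_orth hn (Nat.lt_succ_iff.mp j.isLt) (Nat.lt_succ_iff.mp j'.isLt)]
    by_cases hjj : j = j'
    · subst hjj
      rw [if_pos rfl, if_pos rfl]
      by_cases hc : (j:ℕ) = 0 ∨ (j:ℕ) = n
      · rw [if_pos hc, hσ]; dsimp only; rw [if_pos hc, ← mul_inv,
          Real.mul_self_sqrt (by norm_num : (0:ℝ) ≤ 2)]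
        norm_num
      · rw [if_neg hc, hσ]; dsimp only; rw [if_neg hc]; norm_num
    · have hne : ¬ ((j:ℕ) = (j':ℕ)) := fun h => hjj (Fin.ext h)
      rw [if_neg hne, if_neg hjj, mul_zero]
  set X : Fin (n+1) → Ω → ℝ := fun j ω => ∑ k, O j k * a k ω with hX
  have hXmeas : ∀ j, Measurable (X j) := fun j =>
    Finset.measurable_sum _ fun k _ => ((ha_meas k).const_mul _)
  have hA : Measurable (fun ω (i : Fin (n+1)) => a (i:ℕ) ω) :=
    measurable_pi_iff.2 fun i => ha_meas i
  have hTmeas : Measurable (fun x : Fin (n+1) → ℝ => fun j => ∑ k, O j k * x k) :=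
    measurable_pi_iff.2 fun j =>
      Finset.measurable_sum _ fun k _ => (measurable_pi_apply k).const_mul _
  have hjoint : Measure.map (fun ω (i : Fin (n+1)) => X i ω) ℙ = ProbAux.stdg (n+1) := by
    have h1 : (fun ω (i : Fin (n+1)) => X i ω)
        = (fun x : Fin (n+1) → ℝ => fun j => ∑ k, O j k * x k)
            ∘ (fun ω (i : Fin (n+1)) => a (i:ℕ) ω) := rfl
    rw [h1, ← Measure.map_map hTmeas hA,
      ProbAux.joint_law a ha_meas ha_indep ha_gauss,
      ProbAux.map_stdg_of_orthonormal (by omega) O horth]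
  obtain ⟨hindepX, hmargX⟩ := ProbAux.indep_of_map_pi X hXmeas hjoint
  have hdval : ∀ (j : Fin (n+1)) (ω : Ω),
      (dval n (fun i => a i ω) (j:ℕ)).re = σf j * X j ω := by
    intro j ω
    rw [DvalAux.dval_eq hn, Complex.ofReal_re,
      ← Fin.sum_univ_eq_sum_range (fun k => DvalAux.creal n ↑j k * a k ω) (n+1), hX]
    dsimp only
    rw [Finset.mul_sum]
    refine Finset.sum_congr rfl fun k _ => ?_
    rw [hO]; dsimp only
    have := hσne j
    field_simp
  refine ⟨?_, ?_, ?_, ?_, ?_, ?_⟩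
  · intro j _ ω
    rw [DvalAux.dval_eq hn]
    exact Complex.ofReal_im _
  · have hfe : (fun (j : Fin (n+1)) ω => (dval n (fun i => a i ω) (j:ℕ)).re)
        = fun j ω => σf j * X j ω := funext fun j => funext fun ω => hdval j ω
    rw [hfe]
    exact hindepX.comp (fun j (x:ℝ) => σf j * x) (fun j => measurable_const_mul _)
  · intro j hj0 hjn
    have hfe : (fun ω => (dval n (fun i => a i ω) j).re) = X ⟨j, by omega⟩ := by
      funext ω
      have h1 := hdval ⟨j, by omega⟩ ω
      rw [show ((⟨j, by omega⟩ : Fin (n+1)):ℕ) = j from rfl] at h1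
      rw [h1, hσ]; dsimp only
      rw [if_neg (show ¬((j:ℕ) = 0 ∨ (j:ℕ) = n) by omega), one_mul]
    rw [hfe]
    exact hmargX _
  · have hfe : (fun ω => (dval n (fun i => a i ω) 0).re)
        = (fun x : ℝ => Real.sqrt 2 * x) ∘ (X ⟨0, by omega⟩) := by
      funext ω
      have h1 := hdval ⟨0, by omega⟩ ω
      rw [show ((⟨0, by omega⟩ : Fin (n+1)):ℕ) = 0 from rfl] at h1
      rw [Function.comp_apply, h1, hσ]; dsimp only
      rw [if_pos (Or.inl rfl)]
    rw [hfe, ← Measure.map_map (measurable_const_mul _) (hXmeas _), hmargX _,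
      gaussianReal_map_const_mul]
    rw [show Real.sqrt 2 * (0:ℝ) = 0 by ring]
    congr 1
    ext
    push_cast
    rw [Real.sq_sqrt (by norm_num : (0:ℝ) ≤ 2)]
    norm_num
  · have hfe : (fun ω => (dval n (fun i => a i ω) n).re)
        = (fun x : ℝ => Real.sqrt 2 * x) ∘ (X ⟨n, by omega⟩) := by
      funext ω
      have h1 := hdval ⟨n, by omega⟩ ω
      rw [show ((⟨n, by omega⟩ : Fin (n+1)):ℕ) = n from rfl] at h1
      rw [Function.comp_apply, h1, hσ]; dsimp only
      rw [if_pos (Or.inr rfl)]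
    rw [hfe, ← Measure.map_map (measurable_const_mul _) (hXmeas _), hmargX _,
      gaussianReal_map_const_mul]
    rw [show Real.sqrt 2 * (0:ℝ) = 0 by ring]
    congr 1
    ext
    push_cast
    rw [Real.sq_sqrt (by norm_num : (0:ℝ) ≤ 2)]
    norm_num
  · intro j hj0 hjn ω
    exact DvalAux.dval_symm hn _ hj0 hjn

end
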